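/- Two orthonormal bases (ξᵢ) and (ζⱼ) of ℂ^d are mutually unbiased (i.e., |⟨ξᵢ, ζⱼ⟩|² = 1/d for all i,j) if and only if the maximal abelian subalgebras of M_d(ℂ) generated by the rank-one projections |ξᵢ⟩⟨ξᵢ| and |ζⱼ⟩⟨ζⱼ| respectively are quasi-orthogonal. -/

import Mathlib

open Matrix

/-- Quasi-orthogonality of unital *-subalgebras of `M_d(ℂ)`. -/
def QuasiOrthogonal {d : ℕ} (A₁ A₂ : StarSubalgebra ℂ (Matrix (Fin d) (Fin d) ℂ)) : Prop :=
  ∀ A ∈ A₁, ∀ B ∈ A₂, Matrix.trace A = 0 → Matrix.trace B = 0 →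
    Matrix.trace (star A * B) = 0

/-- The rank-one projection `|ξ⟩⟨ξ|` as a matrix. -/
def rankOneProj {d : ℕ} (ξ : Fin d → ℂ) : Matrix (Fin d) (Fin d) ℂ :=
  Matrix.of fun a b => ξ a * (starRingEnd ℂ) (ξ b)

variable {d : ℕ}

lemma star_rankOneProj (v : Fin d → ℂ) : star (rankOneProj v) = rankOneProj v := by
  ext a b
  simp only [star_apply, rankOneProj, of_apply, star_mul', RingHom.id_apply,
    RingHomCompTriple.comp_apply, Complex.star_def, Complex.conj_conj]
  ring

lemma trace_rankOneProj (v : Fin d → ℂ) : trace (rankOneProj v) = star v ⬝ᵥ v := by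
  simp only [trace, diag, rankOneProj, of_apply, dotProduct, Pi.star_apply, Complex.star_def]
  exact Finset.sum_congr rfl fun _ _ => mul_comm _ _

lemma rankOneProj_mul' (v w : Fin d → ℂ) :
    rankOneProj v * rankOneProj w =
      Matrix.of fun a b => (star v ⬝ᵥ w) * (v a * (starRingEnd ℂ) (w b)) := by
  ext a b
  simp only [Matrix.mul_apply, rankOneProj, of_apply, dotProduct, Pi.star_apply,
    Complex.star_def, Finset.sum_mul, Finset.mul_sum]
  exact Finset.sum_congr rfl fun c _ => by ring

lemma trace_rankOneProj_mul (v w : Fin d → ℂ) :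
    trace (rankOneProj v * rankOneProj w) = (star v ⬝ᵥ w) * (star w ⬝ᵥ v) := by
  rw [rankOneProj_mul']
  simp only [trace, diag, of_apply, dotProduct, Pi.star_apply, Complex.star_def,
    Finset.mul_sum]
  refine Finset.sum_congr rfl fun c _ => ?_
  ring

section
variable (ξ : Fin d → Fin d → ℂ)

lemma proj_mul (hξ : ∀ i j, star (ξ i) ⬝ᵥ ξ j = if i = j then (1 : ℂ) else 0) (i j : Fin d) :
    rankOneProj (ξ i) * rankOneProj (ξ j) = if i = j then rankOneProj (ξ i) else 0 := by
  rw [rankOneProj_mul', hξ]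
  by_cases h : i = j
  · subst h; ext a b; simp [rankOneProj]
  · ext a b; simp [h, rankOneProj]

lemma sum_proj (hξ : ∀ i j, star (ξ i) ⬝ᵥ ξ j = if i = j then (1 : ℂ) else 0) :
    ∑ i, rankOneProj (ξ i) = 1 := by
  have hUU : (Matrix.of ξ) * (Matrix.of ξ)ᴴ = 1 := by
    ext i j
    have h := hξ j i
    simp only [dotProduct, Pi.star_apply, Complex.star_def] at h
    simp only [Matrix.mul_apply, conjTranspose_apply, of_apply, Matrix.one_apply,
      Complex.star_def]
    rw [show (∑ a, ξ i a * (starRingEnd ℂ) (ξ j a)) =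
      ∑ a, (starRingEnd ℂ) (ξ j a) * ξ i a from
        Finset.sum_congr rfl fun a _ => mul_comm _ _, h]
    by_cases hij : i = j <;> simp [hij, eq_comm]
  have hU' : (Matrix.of ξ)ᴴ * (Matrix.of ξ) = 1 := mul_eq_one_comm.mp hUU
  ext a b
  have h : ((Matrix.of ξ)ᴴ * (Matrix.of ξ)) a b = (1 : Matrix (Fin d) (Fin d) ℂ) a b := by
    rw [hU']
  simp only [Matrix.mul_apply, conjTranspose_apply, of_apply, Matrix.one_apply,
    Complex.star_def] at h
  have h2 := congrArg (starRingEnd ℂ) h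
  simp only [map_sum, _root_.map_mul, Complex.conj_conj, apply_ite (starRingEnd ℂ),
    _root_.map_one, map_zero] at h2
  simp only [Matrix.sum_apply, rankOneProj, of_apply, Matrix.one_apply]
  rw [← h2]

lemma repr_of_mem (hξ : ∀ i j, star (ξ i) ⬝ᵥ ξ j = if i = j then (1 : ℂ) else 0)
    (A : Matrix (Fin d) (Fin d) ℂ)
    (hA : A ∈ StarAlgebra.adjoin ℂ (Set.range fun i => rankOneProj (ξ i))) :
    ∃ a : Fin d → ℂ, A = ∑ i, a i • rankOneProj (ξ i) := by
  induction hA using StarAlgebra.adjoin_induction with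
  | mem x hx =>
    obtain ⟨i, rfl⟩ := hx
    exact ⟨fun j => if j = i then 1 else 0, by simp⟩
  | algebraMap r =>
    exact ⟨fun _ => r, by
      rw [Algebra.algebraMap_eq_smul_one, ← sum_proj ξ hξ, Finset.smul_sum]⟩
  | add x y _ _ hx hy =>
    obtain ⟨a, rfl⟩ := hx; obtain ⟨b, rfl⟩ := hy
    exact ⟨a + b, by rw [← Finset.sum_add_distrib]; simp [add_smul]⟩
  | mul x y _ _ hx hy =>
    obtain ⟨a, rfl⟩ := hx; obtain ⟨b, rfl⟩ := hy
    refine ⟨fun i => a i * b i, ?_⟩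
    rw [Finset.sum_mul]
    refine Finset.sum_congr rfl fun i _ => ?_
    rw [Finset.mul_sum]
    simp_rw [smul_mul_assoc, mul_smul_comm, proj_mul ξ hξ, smul_ite, smul_zero, smul_smul]
    simp
  | star x _ hx =>
    obtain ⟨a, rfl⟩ := hx
    exact ⟨fun i => (starRingEnd ℂ) (a i), by
      rw [star_sum]; simp [star_smul, star_rankOneProj, Complex.star_def]⟩

end

lemma star_dot_comm {d : ℕ} (v w : Fin d → ℂ) :
    star w ⬝ᵥ v = (starRingEnd ℂ) (star v ⬝ᵥ w) := by
  simp only [dotProduct, Pi.star_apply, Complex.star_def, map_sum, _root_.map_mul,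
    Complex.conj_conj]
  exact Finset.sum_congr rfl fun a _ => by ring

lemma trace_repr {d : ℕ} (ξ : Fin d → Fin d → ℂ)
    (hξ : ∀ i j, star (ξ i) ⬝ᵥ ξ j = if i = j then (1 : ℂ) else 0) (a : Fin d → ℂ) :
    trace (∑ i, a i • rankOneProj (ξ i)) = ∑ i, a i := by
  rw [trace_sum]
  refine Finset.sum_congr rfl fun i _ => ?_
  rw [trace_smul, trace_rankOneProj, hξ i i]
  simp

lemma star_repr {d : ℕ} (ξ : Fin d → Fin d → ℂ) (a : Fin d → ℂ) :
    star (∑ i, a i • rankOneProj (ξ i))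
      = ∑ i, (starRingEnd ℂ) (a i) • rankOneProj (ξ i) := by
  rw [star_sum]
  refine Finset.sum_congr rfl fun i _ => ?_
  rw [star_smul, star_rankOneProj]
  simp [Complex.star_def]

lemma trace_repr_mul {d : ℕ} (ξ ζ : Fin d → Fin d → ℂ) (a b : Fin d → ℂ) :
    trace ((∑ i, a i • rankOneProj (ξ i)) * (∑ j, b j • rankOneProj (ζ j)))
      = ∑ i, ∑ j, (a i * b j) * ((star (ξ i) ⬝ᵥ ζ j) * (star (ζ j) ⬝ᵥ ξ i)) := by
  rw [Finset.sum_mul, trace_sum]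
  refine Finset.sum_congr rfl fun i _ => ?_
  rw [Finset.mul_sum, trace_sum]
  refine Finset.sum_congr rfl fun j _ => ?_
  rw [smul_mul_assoc, mul_smul_comm, trace_smul, trace_smul, trace_rankOneProj_mul]
  simp [smul_eq_mul]
  ring

theorem stmt2 {d : ℕ} (hd : 0 < d) (ξ ζ : Fin d → Fin d → ℂ)
    (hξ : ∀ i j, star (ξ i) ⬝ᵥ ξ j = if i = j then (1 : ℂ) else 0)
    (hζ : ∀ i j, star (ζ i) ⬝ᵥ ζ j = if i = j then (1 : ℂ) else 0) :
    (∀ i j, ‖star (ξ i) ⬝ᵥ ζ j‖ ^ 2 = 1 / (d : ℝ)) ↔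
      QuasiOrthogonal
        (StarAlgebra.adjoin ℂ (Set.range fun i => rankOneProj (ξ i)))
        (StarAlgebra.adjoin ℂ (Set.range fun j => rankOneProj (ζ j))) := by
  have hdc : (d : ℂ) ≠ 0 := Nat.cast_ne_zero.mpr hd.ne'
  have hnorm : ∀ i j, ((‖star (ξ i) ⬝ᵥ ζ j‖ ^ 2 : ℝ) : ℂ)
      = (star (ξ i) ⬝ᵥ ζ j) * (star (ζ j) ⬝ᵥ ξ i) := by
    intro i j
    rw [show star (ζ j) ⬝ᵥ ξ i = (starRingEnd ℂ) (star (ξ i) ⬝ᵥ ζ j) from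
      star_dot_comm _ _, Complex.mul_conj, Complex.sq_norm]
  constructor
  · intro h A hA B hB htA htB
    obtain ⟨a, rfl⟩ := repr_of_mem ξ hξ A hA
    obtain ⟨b, rfl⟩ := repr_of_mem ζ hζ B hB
    rw [trace_repr ξ hξ] at htA
    rw [trace_repr ζ hζ] at htB
    rw [star_repr, trace_repr_mul]
    have hT : ∀ i j, (star (ξ i) ⬝ᵥ ζ j) * (star (ζ j) ⬝ᵥ ξ i) = ((d : ℂ))⁻¹ := by
      intro i j
      rw [← hnorm i j, h i j]
      push_cast
      ring
    refine Finset.sum_eq_zero fun i _ => ?_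
    calc ∑ j, ((starRingEnd ℂ) (a i) * b j) *
          ((star (ξ i) ⬝ᵥ ζ j) * (star (ζ j) ⬝ᵥ ξ i))
        = ((starRingEnd ℂ) (a i) * ((d : ℂ))⁻¹) * ∑ j, b j := by
          rw [Finset.mul_sum]
          exact Finset.sum_congr rfl fun j _ => by rw [hT i j]; ring
      _ = 0 := by rw [htB, mul_zero]
  · intro h i j
    set c : ℂ := ((d : ℂ))⁻¹ with hc
    have hcd : c * (d : ℂ) = 1 := inv_mul_cancel₀ hdc
    have memA : rankOneProj (ξ i) - c • 1 ∈
        StarAlgebra.adjoin ℂ (Set.range fun i => rankOneProj (ξ i)) :=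
      sub_mem (StarAlgebra.subset_adjoin ℂ _ ⟨i, rfl⟩)
        (SMulMemClass.smul_mem c (one_mem _))
    have memB : rankOneProj (ζ j) - c • 1 ∈
        StarAlgebra.adjoin ℂ (Set.range fun j => rankOneProj (ζ j)) :=
      sub_mem (StarAlgebra.subset_adjoin ℂ _ ⟨j, rfl⟩)
        (SMulMemClass.smul_mem c (one_mem _))
    have htrA : trace (rankOneProj (ξ i) - c • 1) = 0 := by
      rw [trace_sub, trace_smul, trace_rankOneProj, hξ i i, Matrix.trace_one]
      simp only [if_pos rfl, smul_eq_mul, Fintype.card_fin]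
      push_cast
      rw [hcd]
      ring
    have htrB : trace (rankOneProj (ζ j) - c • 1) = 0 := by
      rw [trace_sub, trace_smul, trace_rankOneProj, hζ j j, Matrix.trace_one]
      simp only [if_pos rfl, smul_eq_mul, Fintype.card_fin]
      push_cast
      rw [hcd]
      ring
    have h0 := h _ memA _ memB htrA htrB
    have hstar : star (rankOneProj (ξ i) - c • 1) = rankOneProj (ξ i) - c • 1 := by
      rw [star_sub, star_rankOneProj, star_smul, star_one]
      congr 1
      simp [hc, Complex.star_def, map_inv₀]
    rw [hstar] at h0
    simp only [sub_mul, mul_sub, trace_sub, smul_mul_assoc, mul_smul_comm, trace_smul,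
      one_mul, mul_one, trace_rankOneProj_mul, trace_rankOneProj, hξ i i, hζ j j,
      Matrix.trace_one, Fintype.card_fin, if_pos (rfl : i = i), if_pos (rfl : j = j),
      eq_self_iff_true, if_true, smul_eq_mul] at h0
    have hT : (star (ξ i) ⬝ᵥ ζ j) * (star (ζ j) ⬝ᵥ ξ i) = c := by
      have : c * (c * (d : ℂ)) = c := by rw [hcd, mul_one]
      linear_combination h0 - this
    have : ((‖star (ξ i) ⬝ᵥ ζ j‖ ^ 2 : ℝ) : ℂ) = ((1 / (d : ℝ) : ℝ) : ℂ) := by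
      rw [hnorm i j, hT, hc]
      push_cast
      ring
    exact_mod_cast this
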